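/- For all ℓ, j with r ≤ ℓ < j ≤ n−1 one has, in H(χ): V_ℓ * V_j = V_j * V_ℓ = p^{n−j−1}(p−1) · V_ℓ. -/

import Mathlib

set_option linter.unusedSectionVars false
set_option linter.unusedVariables false
set_option linter.unnecessarySimpa false
set_option maxHeartbeats 1000000
open Matrix


noncomputable section

/-- `y(t) = (1,0;t,1)` as an element of `GL₂(R)`. -/
def yG {R : Type*} [CommRing R] (t : R) : GL (Fin 2) R :=
  ⟨!![1, 0; t, 1], !![1, 0; -t, 1],
   by ext i j; fin_cases i <;> fin_cases j <;> simp [Matrix.mul_apply, Fin.sum_univ_two],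
   by ext i j; fin_cases i <;> fin_cases j <;> simp [Matrix.mul_apply, Fin.sum_univ_two]⟩

/-- Membership in the subgroup `B` of invertible upper triangular matrices. -/
def inB {R : Type*} [CommRing R] (g : GL (Fin 2) R) : Prop :=
  (g : Matrix (Fin 2) (Fin 2) R) 1 0 = 0

/-- `χ_B(b) = χ(d_b)`, where `d_b` is the `(2,2)`-entry of `b` (for `b ∈ B` this entry is a
unit; the function is extended by `0` elsewhere). -/
def chiB {R : Type*} [CommRing R] (χ : Rˣ →* ℂˣ) (g : GL (Fin 2) R) : ℂ :=
  letI := Classical.dec (IsUnit ((g : Matrix (Fin 2) (Fin 2) R) 1 1))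
  if h : IsUnit ((g : Matrix (Fin 2) (Fin 2) R) 1 1) then (χ h.unit : ℂ) else 0

/-- `|B|`. -/
def cardB (R : Type*) [CommRing R] : ℕ := Nat.card {g : GL (Fin 2) R // inB g}

/-- Convolution `(f*g)(x) = |B|⁻¹ Σ_{y∈G} f(y) g(y⁻¹x)`. -/
def conv {R : Type*} [CommRing R] [Fintype R] [DecidableEq R]
    (f g : GL (Fin 2) R → ℂ) : GL (Fin 2) R → ℂ :=
  fun x => (cardB R : ℂ)⁻¹ * ∑ y : GL (Fin 2) R, f y * g (y⁻¹ * x)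

/-- Membership in the Hecke algebra `H(χ)` of `χ_B`-bi-equivariant functions on `G`. -/
def memH {R : Type*} [CommRing R] (χ : Rˣ →* ℂˣ) (f : GL (Fin 2) R → ℂ) : Prop :=
  ∀ b x b' : GL (Fin 2) R, inB b → inB b' →
    f (b * x * b') = chiB χ b * chiB χ b' * f x

/-- `V_j`: the unique element of `H(χ)` vanishing off the double coset `B y_j B` with
`V_j(y_j) = 1`, where `y_j = (1,0;p^j,1)`. -/
def isV (p n : ℕ) (χ : (ZMod (p ^ n))ˣ →* ℂˣ) (j : ℕ)
    (V : GL (Fin 2) (ZMod (p ^ n)) → ℂ) : Prop :=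
  memH χ V ∧
  (∀ x : GL (Fin 2) (ZMod (p ^ n)),
      (¬ ∃ b b' : GL (Fin 2) (ZMod (p ^ n)), inB b ∧ inB b' ∧
          x = b * yG ((p : ZMod (p ^ n)) ^ j) * b') → V x = 0) ∧
  V (yG ((p : ZMod (p ^ n)) ^ j)) = 1

/-- `χ` has conductor `p^r`: trivial on units `≡ 1 (mod p^r)`, nontrivial on units
`≡ 1 (mod p^{r−1})`. -/
def hasConductor (p n r : ℕ) (χ : (ZMod (p ^ n))ˣ →* ℂˣ) : Prop :=
  (∀ u : (ZMod (p ^ n))ˣ, (p : ZMod (p ^ n)) ^ r ∣ ((u : ZMod (p ^ n)) - 1) → χ u = 1) ∧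
  ∃ u : (ZMod (p ^ n))ˣ, (p : ZMod (p ^ n)) ^ (r - 1) ∣ ((u : ZMod (p ^ n)) - 1) ∧ χ u ≠ 1


section Plumb
variable {R : Type*} [CommRing R]

@[simp] lemma coe_yG (t : R) : ((yG t : GL (Fin 2) R) : Matrix (Fin 2) (Fin 2) R) = !![1,0;t,1] := rfl

def mkGL (M : Matrix (Fin 2) (Fin 2) R) (h : IsUnit M.det) : GL (Fin 2) R :=
  ((Matrix.isUnit_iff_isUnit_det M).mpr h).unit
@[simp] lemma coe_mkGL (M : Matrix (Fin 2) (Fin 2) R) (h : IsUnit M.det) :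
    (mkGL M h : Matrix (Fin 2) (Fin 2) R) = M := IsUnit.unit_spec _
lemma isUnit_det_GL (g : GL (Fin 2) R) : IsUnit ((g : Matrix (Fin 2) (Fin 2) R).det) :=
  (Matrix.isUnit_iff_isUnit_det _).mp g.isUnit
lemma det_upper (M : Matrix (Fin 2) (Fin 2) R) (h : M 1 0 = 0) : M.det = M 0 0 * M 1 1 := by
  rw [Matrix.det_fin_two, h, mul_zero, sub_zero]

lemma solve10 (y x : GL (Fin 2) R) :
    (y : Matrix (Fin 2) (Fin 2) R).det * ((↑(y⁻¹ * x) : Matrix (Fin 2) (Fin 2) R) 1 0)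
      = (y : Matrix (Fin 2) (Fin 2) R) 0 0 * (x : Matrix (Fin 2) (Fin 2) R) 1 0
        - (y : Matrix (Fin 2) (Fin 2) R) 1 0 * (x : Matrix (Fin 2) (Fin 2) R) 0 0 := by
  have hYZ : (y : Matrix (Fin 2) (Fin 2) R) * (↑(y⁻¹ * x) : Matrix (Fin 2) (Fin 2) R)
      = (x : Matrix (Fin 2) (Fin 2) R) := by
    rw [← Matrix.GeneralLinearGroup.coe_mul, mul_inv_cancel_left]
  have h10 := congrFun (congrFun hYZ 1) 0
  have h00 := congrFun (congrFun hYZ 0) 0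
  simp only [Matrix.mul_apply, Fin.sum_univ_two] at h10 h00
  rw [Matrix.det_fin_two]
  linear_combination (y : Matrix (Fin 2) (Fin 2) R) 0 0 * h10
    - (y : Matrix (Fin 2) (Fin 2) R) 1 0 * h00

lemma solve00 (y x : GL (Fin 2) R) :
    (y : Matrix (Fin 2) (Fin 2) R).det * ((↑(y⁻¹ * x) : Matrix (Fin 2) (Fin 2) R) 0 0)
      = (y : Matrix (Fin 2) (Fin 2) R) 1 1 * (x : Matrix (Fin 2) (Fin 2) R) 0 0
        - (y : Matrix (Fin 2) (Fin 2) R) 0 1 * (x : Matrix (Fin 2) (Fin 2) R) 1 0 := by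
  have hYZ : (y : Matrix (Fin 2) (Fin 2) R) * (↑(y⁻¹ * x) : Matrix (Fin 2) (Fin 2) R)
      = (x : Matrix (Fin 2) (Fin 2) R) := by
    rw [← Matrix.GeneralLinearGroup.coe_mul, mul_inv_cancel_left]
  have h10 := congrFun (congrFun hYZ 1) 0
  have h00 := congrFun (congrFun hYZ 0) 0
  simp only [Matrix.mul_apply, Fin.sum_univ_two] at h10 h00
  rw [Matrix.det_fin_two]
  linear_combination (y : Matrix (Fin 2) (Fin 2) R) 1 1 * h00
    - (y : Matrix (Fin 2) (Fin 2) R) 0 1 * h10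

lemma detmul (y x : GL (Fin 2) R) :
    (x : Matrix (Fin 2) (Fin 2) R).det
      = (y : Matrix (Fin 2) (Fin 2) R).det * (↑(y⁻¹ * x) : Matrix (Fin 2) (Fin 2) R).det := by
  have hYZ : (y : Matrix (Fin 2) (Fin 2) R) * (↑(y⁻¹ * x) : Matrix (Fin 2) (Fin 2) R)
      = (x : Matrix (Fin 2) (Fin 2) R) := by
    rw [← Matrix.GeneralLinearGroup.coe_mul, mul_inv_cancel_left]
  rw [← hYZ, Matrix.det_mul]

lemma entry10_mul (y z : GL (Fin 2) R) :
    ((↑(y * z) : Matrix (Fin 2) (Fin 2) R) 1 0)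
      = (y : Matrix (Fin 2) (Fin 2) R) 1 0 * (z : Matrix (Fin 2) (Fin 2) R) 0 0
        + (y : Matrix (Fin 2) (Fin 2) R) 1 1 * (z : Matrix (Fin 2) (Fin 2) R) 1 0 := by
  rw [Matrix.GeneralLinearGroup.coe_mul]
  simp [Matrix.mul_apply, Fin.sum_univ_two]

def chiE (χ : Rˣ →* ℂˣ) (z : R) : ℂ :=
  letI := Classical.dec (IsUnit z)
  if h : IsUnit z then (χ h.unit : ℂ) else 0

lemma chiB_eq_chiE (χ : Rˣ →* ℂˣ) (g : GL (Fin 2) R) :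
    chiB χ g = chiE χ ((g : Matrix (Fin 2) (Fin 2) R) 1 1) := rfl

@[simp] lemma chiE_unit (χ : Rˣ →* ℂˣ) (u : Rˣ) : chiE χ (u : R) = χ u := by
  rw [chiE, dif_pos u.isUnit]
  congr 1
  exact congrArg χ (Units.ext u.isUnit.unit_spec)

lemma chiE_one (χ : Rˣ →* ℂˣ) : chiE χ (1 : R) = 1 := by
  have := chiE_unit χ 1; simpa using this

lemma chiE_mul (χ : Rˣ →* ℂˣ) {z w : R} (hz : IsUnit z) (hw : IsUnit w) :
    chiE χ (z * w) = chiE χ z * chiE χ w := by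
  obtain ⟨a, rfl⟩ := hz
  obtain ⟨b, rfl⟩ := hw
  rw [← Units.val_mul, chiE_unit, chiE_unit, chiE_unit, _root_.map_mul, Units.val_mul]

lemma chiE_ne_zero (χ : Rˣ →* ℂˣ) {z : R} (hz : IsUnit z) : chiE χ z ≠ 0 := by
  obtain ⟨a, rfl⟩ := hz
  rw [chiE_unit]; exact Units.ne_zero _

lemma chiE_not_unit (χ : Rˣ →* ℂˣ) {z : R} (hz : ¬ IsUnit z) : chiE χ z = 0 := by
  rw [chiE, dif_neg hz]
end Plumb

variable {p n : ℕ} [Fact p.Prime]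

lemma pow_p_n_eq_zero : ((p : ZMod (p ^ n)) ^ n) = 0 := by
  have := ZMod.natCast_self (p ^ n); push_cast at this; exact this

lemma one_lt_pn (hn : 1 ≤ n) : 1 < p ^ n :=
  Nat.one_lt_pow (by omega) (Fact.out : p.Prime).one_lt

lemma nontrivR (hn : 1 ≤ n) : Nontrivial (ZMod (p ^ n)) := by
  haveI : Fact (1 < p ^ n) := ⟨one_lt_pn hn⟩; infer_instance

lemma not_isUnit_p (hn : 1 ≤ n) : ¬ IsUnit ((p : ZMod (p ^ n))) := by
  haveI := nontrivR (p := p) hn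
  intro h
  have h2 := h.pow n
  rw [pow_p_n_eq_zero, isUnit_zero_iff] at h2
  exact one_ne_zero h2.symm

lemma isUnit_add_p_mul (hn : 1 ≤ n) {u : ZMod (p ^ n)} (hu : IsUnit u) (t : ZMod (p ^ n)) :
    IsUnit (u + (p : ZMod (p ^ n)) * t) := by
  obtain ⟨v, rfl⟩ := hu
  have hv : (v : ZMod (p ^ n)) * ↑v⁻¹ = 1 := v.mul_inv
  have key : (v : ZMod (p ^ n)) + (p : ZMod (p ^ n)) * t
      = (v : ZMod (p ^ n)) * (1 + (p : ZMod (p ^ n)) * (↑v⁻¹ * t)) := by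
    linear_combination (-((p : ZMod (p ^ n)) * t)) * hv
  rw [key]
  exact v.isUnit.mul (IsNilpotent.isUnit_one_add
    ⟨n, by rw [mul_pow, pow_p_n_eq_zero, zero_mul]⟩)

def cellc (p n : ℕ) (m : ℕ) (c : ZMod (p ^ n)) : Prop :=
  ∃ u : (ZMod (p ^ n))ˣ, c = (p : ZMod (p ^ n)) ^ m * u

lemma isUnit_natCast_of_not_dvd {m : ℕ} (h : ¬ p ∣ m) : IsUnit ((m : ZMod (p ^ n))) := by
  have h1 : Nat.Coprime m (p ^ n) :=
    Nat.Coprime.pow_right n (((Fact.out : p.Prime).coprime_iff_not_dvd.mpr h).symm)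
  exact ⟨ZMod.unitOfCoprime m h1, (ZMod.coe_unitOfCoprime m h1).symm⟩

lemma not_dvd_unit (hn : 1 ≤ n) (u : (ZMod (p ^ n))ˣ) :
    ¬ (p : ZMod (p ^ n)) ∣ (u : ZMod (p ^ n)) := by
  rintro ⟨t, ht⟩
  exact not_isUnit_p hn (isUnit_of_dvd_unit ⟨t, ht⟩ u.isUnit)

/-- "valuation exactly m" predicate on `ZMod (p^n)`. -/
lemma card_cellc (hn : 1 ≤ n) {j : ℕ} (hj : j < n) :
    Nat.card {s : ZMod (p ^ n) // cellc p n j s} = p ^ (n - j - 1) * (p - 1) := by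
  classical
  have hp : p.Prime := Fact.out
  have hnj : 0 < n - j := by omega
  set F : Finset ℕ := (Finset.range (p ^ (n - j))).filter (fun m => ¬ p ∣ m) with hF
  have hME : p ^ j * p ^ (n - j) = p ^ n := by rw [← pow_add]; congr 1; omega
  set f : {m // m ∈ F} → {s : ZMod (p ^ n) // cellc p n j s} := fun mm =>
    ⟨(p : ZMod (p ^ n)) ^ j * (mm.1 : ZMod (p ^ n)),
     (isUnit_natCast_of_not_dvd ((Finset.mem_filter.mp mm.2).2)).unit,
     by rw [IsUnit.unit_spec]⟩ with hfdef
  have hbij : Function.Bijective f := by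
    constructor
    · rintro ⟨m₁, hm₁⟩ ⟨m₂, hm₂⟩ h
      have hval := congrArg Subtype.val h
      have h' : ((p ^ j * m₁ : ℕ) : ZMod (p ^ n)) = ((p ^ j * m₂ : ℕ) : ZMod (p ^ n)) := by
        push_cast
        exact hval
      rw [ZMod.natCast_eq_natCast_iff, ← hME] at h'
      have h2 := Nat.ModEq.mul_left_cancel' (pow_pos hp.pos j).ne' h'
      exact Subtype.ext (h2.eq_of_lt_of_lt
        (Finset.mem_range.mp (Finset.mem_filter.mp hm₁).1)
        (Finset.mem_range.mp (Finset.mem_filter.mp hm₂).1))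
    · rintro ⟨s, u, hs⟩
      set m := (u : ZMod (p ^ n)).val % p ^ (n - j) with hm
      have hmlt : m < p ^ (n - j) := Nat.mod_lt _ (pow_pos hp.pos _)
      have hudecomp : (u : ZMod (p ^ n)).val
          = p ^ (n - j) * ((u : ZMod (p ^ n)).val / p ^ (n - j)) + m := (Nat.div_add_mod _ _).symm
      have hvalcast : (((u : ZMod (p ^ n)).val : ℕ) : ZMod (p ^ n)) = (u : ZMod (p ^ n)) :=
        ZMod.natCast_rightInverse _
      have hpm : ¬ p ∣ m := by
        intro hdvd
        apply not_dvd_unit hn u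
        have hdvd2 : p ∣ (u : ZMod (p ^ n)).val := by
          rw [hudecomp]
          exact Nat.dvd_add (Dvd.dvd.mul_right (dvd_pow_self p (by omega)) _) hdvd
        obtain ⟨t, ht⟩ := hdvd2
        rw [← hvalcast, ht]
        push_cast
        exact Dvd.intro _ rfl
      refine ⟨⟨m, Finset.mem_filter.mpr ⟨Finset.mem_range.mpr hmlt, hpm⟩⟩, ?_⟩
      apply Subtype.ext
      show (p : ZMod (p ^ n)) ^ j * (m : ZMod (p ^ n)) = s
      have hkey : (p : ZMod (p ^ n)) ^ j * (((u : ZMod (p ^ n)).val : ℕ) : ZMod (p ^ n))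
          = (p : ZMod (p ^ n)) ^ j * (m : ZMod (p ^ n)) := by
        conv_lhs => rw [hudecomp]
        push_cast
        rw [mul_add, ← mul_assoc, ← pow_add]
        have hjn : j + (n - j) = n := by omega
        rw [hjn, pow_p_n_eq_zero, zero_mul, zero_add]
      rw [hs, ← hvalcast, hkey]
  rw [← Nat.card_eq_of_bijective f hbij, Nat.card_eq_fintype_card, Fintype.card_coe]
  have hFcard : F.card = (p ^ (n - j)).totient := by
    rw [Nat.totient, hF]
    congr 1
    apply Finset.filter_congr
    intro m _
    constructor
    · intro h
      exact Nat.Coprime.pow_left _ (hp.coprime_iff_not_dvd.mpr h)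
    · intro h
      exact hp.coprime_iff_not_dvd.mp ((Nat.coprime_pow_left_iff hnj _ _).mp h)
  rw [hFcard, Nat.totient_prime_pow hp hnj]

lemma cellc_dvd {m k : ℕ} (hk : k ≤ m) {c : ZMod (p ^ n)} (h : cellc p n m c) :
    (p : ZMod (p ^ n)) ^ k ∣ c := by
  obtain ⟨u, rfl⟩ := h
  exact Dvd.dvd.mul_right (pow_dvd_pow _ hk) _

lemma cellc_p_dvd {m : ℕ} (hm : 1 ≤ m) {c : ZMod (p ^ n)} (h : cellc p n m c) :
    (p : ZMod (p ^ n)) ∣ c := by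
  have := cellc_dvd (k := 1) hm h
  rwa [pow_one] at this

/-- if `p ∣ g 1 0` then the diagonal entries of `g ∈ GL₂` are units -/
lemma units_of_dvd10 (hn : 1 ≤ n) {g : GL (Fin 2) (ZMod (p ^ n))}
    (h : (p : ZMod (p ^ n)) ∣ (g : Matrix (Fin 2) (Fin 2) (ZMod (p ^ n))) 1 0) :
    IsUnit ((g : Matrix (Fin 2) (Fin 2) (ZMod (p ^ n))) 0 0)
      ∧ IsUnit ((g : Matrix (Fin 2) (Fin 2) (ZMod (p ^ n))) 1 1) := by
  obtain ⟨t, ht⟩ := h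
  have hdet := isUnit_det_GL g
  have key : (g : Matrix (Fin 2) (Fin 2) (ZMod (p ^ n))) 0 0
      * (g : Matrix (Fin 2) (Fin 2) (ZMod (p ^ n))) 1 1
      = (g : Matrix (Fin 2) (Fin 2) (ZMod (p ^ n))).det
        + (p : ZMod (p ^ n)) * ((g : Matrix (Fin 2) (Fin 2) (ZMod (p ^ n))) 0 1 * t) := by
    rw [Matrix.det_fin_two]
    linear_combination (g : Matrix (Fin 2) (Fin 2) (ZMod (p ^ n))) 0 1 * ht
  have hu : IsUnit ((g : Matrix (Fin 2) (Fin 2) (ZMod (p ^ n))) 0 0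
      * (g : Matrix (Fin 2) (Fin 2) (ZMod (p ^ n))) 1 1) := by
    rw [key]; exact isUnit_add_p_mul hn hdet _
  exact ⟨isUnit_of_mul_isUnit_left hu, by rw [mul_comm] at hu; exact isUnit_of_mul_isUnit_left hu⟩

def Vexp (p n : ℕ) [Fact p.Prime] (χ : (ZMod (p ^ n))ˣ →* ℂˣ) (m : ℕ)
    (g : GL (Fin 2) (ZMod (p ^ n))) : ℂ :=
  letI := Classical.dec (cellc p n m ((g : Matrix (Fin 2) (Fin 2) (ZMod (p ^ n))) 1 0))
  if cellc p n m ((g : Matrix (Fin 2) (Fin 2) (ZMod (p ^ n))) 1 0) then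
    chiE χ ((g : Matrix (Fin 2) (Fin 2) (ZMod (p ^ n))).det)
      / chiE χ ((g : Matrix (Fin 2) (Fin 2) (ZMod (p ^ n))) 0 0)
  else 0

lemma isV_eq (hn : 1 ≤ n) {χ : (ZMod (p ^ n))ˣ →* ℂˣ} {m : ℕ} (hm : 1 ≤ m)
    {V : GL (Fin 2) (ZMod (p ^ n)) → ℂ} (hV : isV p n χ m V) :
    V = Vexp p n χ m := by
  classical
  funext g
  set A := (g : Matrix (Fin 2) (Fin 2) (ZMod (p ^ n))) with hA
  by_cases hc : cellc p n m (A 1 0)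
  · obtain ⟨u, hu⟩ := hc
    have hdvd : (p : ZMod (p ^ n)) ∣ A 1 0 := cellc_p_dvd hm ⟨u, hu⟩
    obtain ⟨ha, hd⟩ := units_of_dvd10 hn hdvd
    have hdet := isUnit_det_GL g
    set a := A 0 0
    set ai := ((ha.unit⁻¹ : (ZMod (p ^ n))ˣ) : ZMod (p ^ n)) with hai_def
    have hai : a * ai = 1 := ha.mul_val_inv
    set v : (ZMod (p ^ n))ˣ := u * ha.unit⁻¹ with hvdef
    have hvval : (v : ZMod (p ^ n)) = (u : ZMod (p ^ n)) * ai := rfl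
    have hvinv : ((v⁻¹ : (ZMod (p ^ n))ˣ) : ZMod (p ^ n)) * (v : ZMod (p ^ n)) = 1 := v.inv_mul
    have hdetv : IsUnit (!![((v⁻¹ : (ZMod (p ^ n))ˣ) : ZMod (p ^ n)), 0; 0, 1]).det := by
      rw [det_upper _ (by simp)]; simpa using (v⁻¹).isUnit
    set b₁ := mkGL _ hdetv with hb₁def
    have hdetb₂ : IsUnit (!![(v : ZMod (p ^ n)) * a, (v : ZMod (p ^ n)) * A 0 1; 0,
        A.det * ai]).det := by
      rw [det_upper _ (by simp)]
      simp
      exact ⟨ha, hdet, ha.unit⁻¹.isUnit⟩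
    set b₂ := mkGL _ hdetb₂ with hb₂def
    have hib₁ : inB b₁ := by
      show (_ : Matrix _ _ _) 1 0 = 0
      rw [hb₁def, coe_mkGL]
      norm_num
    have hib₂ : inB b₂ := by
      show (_ : Matrix _ _ _) 1 0 = 0
      rw [hb₂def, coe_mkGL]
      norm_num
    have hdecomp : b₁ * yG ((p : ZMod (p ^ n)) ^ m) * b₂ = g := by
      apply Units.ext
      show ((b₁ * yG _ * b₂ : GL (Fin 2) (ZMod (p ^ n))) : Matrix _ _ _) = A
      rw [Matrix.GeneralLinearGroup.coe_mul, Matrix.GeneralLinearGroup.coe_mul,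
        hb₁def, hb₂def, coe_mkGL, coe_mkGL, coe_yG]
      have hdet2 : A.det = a * A 1 1 - A 0 1 * A 1 0 := Matrix.det_fin_two A
      ext i j
      fin_cases i <;> fin_cases j <;>
        simp [Matrix.mul_apply, Fin.sum_univ_two]
      · ring
      · linear_combination ((p : ZMod (p ^ n)) ^ m * a) * hvval
          + ((p : ZMod (p ^ n)) ^ m * (u : ZMod (p ^ n))) * hai - hu
      · linear_combination ((p : ZMod (p ^ n)) ^ m * A 0 1) * hvval + ai * hdet2
          - (A 0 1 * ai) * hu + A 1 1 * hai
    have hmem := hV.1 b₁ (yG ((p : ZMod (p ^ n)) ^ m)) b₂ hib₁ hib₂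
    rw [hdecomp, hV.2.2, mul_one] at hmem
    have hchib₁ : chiB χ b₁ = 1 := by
      rw [chiB_eq_chiE, hb₁def, coe_mkGL]
      simpa using chiE_one χ
    have hchib₂ : chiB χ b₂ = chiE χ (A.det * ai) := by
      have hent : (!![(v : ZMod (p ^ n)) * a, (v : ZMod (p ^ n)) * A 0 1; 0,
          A.det * ai] : Matrix (Fin 2) (Fin 2) (ZMod (p ^ n))) 1 1 = A.det * ai := by norm_num
      rw [chiB_eq_chiE, hb₂def, coe_mkGL, hent]
    rw [hmem, hchib₁, hchib₂, one_mul, Vexp, if_pos ⟨u, hu⟩]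
    rw [eq_div_iff (chiE_ne_zero χ ha), ← chiE_mul χ (hdet.mul ha.unit⁻¹.isUnit) ha]
    congr 1
    rw [mul_assoc]
    have hai2 : ai * a = 1 := ha.val_inv_mul
    rw [hai2, mul_one]
  · rw [Vexp, if_neg hc]
    apply hV.2.1
    rintro ⟨b, b', hb, hb', rfl⟩
    apply hc
    have hB11 : IsUnit ((b : Matrix (Fin 2) (Fin 2) (ZMod (p ^ n))) 1 1) := by
      have := isUnit_det_GL b
      rw [det_upper _ hb, mul_comm] at this
      exact isUnit_of_mul_isUnit_left this
    have hB'00 : IsUnit ((b' : Matrix (Fin 2) (Fin 2) (ZMod (p ^ n))) 0 0) := by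
      have := isUnit_det_GL b'
      rw [det_upper _ hb'] at this
      exact isUnit_of_mul_isUnit_left this
    refine ⟨hB11.unit * hB'00.unit, ?_⟩
    have h1 : ((↑(b * yG ((p : ZMod (p ^ n)) ^ m)) : Matrix (Fin 2) (Fin 2) (ZMod (p ^ n))) 1 0)
        = (b : Matrix (Fin 2) (Fin 2) (ZMod (p ^ n))) 1 1 * (p : ZMod (p ^ n)) ^ m := by
      have hb0 : (b : Matrix (Fin 2) (Fin 2) (ZMod (p ^ n))) 1 0 = 0 := hb
      rw [entry10_mul, hb0, coe_yG]
      norm_num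
    rw [hA, entry10_mul, h1]
    have h2 : ((↑(b * yG ((p : ZMod (p ^ n)) ^ m)) : Matrix (Fin 2) (Fin 2) (ZMod (p ^ n))) 1 1)
        = (b : Matrix (Fin 2) (Fin 2) (ZMod (p ^ n))) 1 1 := by
      have hb0 : (b : Matrix (Fin 2) (Fin 2) (ZMod (p ^ n))) 1 0 = 0 := hb
      rw [Matrix.GeneralLinearGroup.coe_mul, coe_yG]
      simp [Matrix.mul_apply, Fin.sum_univ_two, hb0]
    have hb'0 : (b' : Matrix (Fin 2) (Fin 2) (ZMod (p ^ n))) 1 0 = 0 := hb'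
    rw [h2, hb'0, mul_zero, add_zero, Units.val_mul, IsUnit.unit_spec, IsUnit.unit_spec]
    ring

lemma term_eq (hn : 1 ≤ n) {r : ℕ} (hr : 1 ≤ r) {χ : (ZMod (p ^ n))ˣ →* ℂˣ}
    (hχ1 : ∀ u : (ZMod (p ^ n))ˣ, (p : ZMod (p ^ n)) ^ r ∣ ((u : ZMod (p ^ n)) - 1) → χ u = 1)
    {ℓ : ℕ} (hℓ1 : 1 ≤ ℓ)
    (x y : GL (Fin 2) (ZMod (p ^ n)))
    (hx : cellc p n ℓ ((x : Matrix (Fin 2) (Fin 2) (ZMod (p ^ n))) 1 0))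
    (hpc : (p : ZMod (p ^ n)) ∣ (y : Matrix (Fin 2) (Fin 2) (ZMod (p ^ n))) 1 0)
    (hs : (p : ZMod (p ^ n)) ^ r ∣
      ((y : Matrix (Fin 2) (Fin 2) (ZMod (p ^ n))) 0 0
          * (x : Matrix (Fin 2) (Fin 2) (ZMod (p ^ n))) 1 0
        - (y : Matrix (Fin 2) (Fin 2) (ZMod (p ^ n))) 1 0
          * (x : Matrix (Fin 2) (Fin 2) (ZMod (p ^ n))) 0 0)) :
    chiE χ ((y : Matrix (Fin 2) (Fin 2) (ZMod (p ^ n))).det)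
        / chiE χ ((y : Matrix (Fin 2) (Fin 2) (ZMod (p ^ n))) 0 0)
      * (chiE χ ((↑(y⁻¹ * x) : Matrix (Fin 2) (Fin 2) (ZMod (p ^ n))).det)
        / chiE χ ((↑(y⁻¹ * x) : Matrix (Fin 2) (Fin 2) (ZMod (p ^ n))) 0 0))
    = chiE χ ((x : Matrix (Fin 2) (Fin 2) (ZMod (p ^ n))).det)
        / chiE χ ((x : Matrix (Fin 2) (Fin 2) (ZMod (p ^ n))) 0 0) := by
  set X := (x : Matrix (Fin 2) (Fin 2) (ZMod (p ^ n))) with hX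
  set Y := (y : Matrix (Fin 2) (Fin 2) (ZMod (p ^ n))) with hY
  set Z := (↑(y⁻¹ * x) : Matrix (Fin 2) (Fin 2) (ZMod (p ^ n))) with hZ
  obtain ⟨ha, hd⟩ := units_of_dvd10 hn hpc
  obtain ⟨hα, _⟩ := units_of_dvd10 hn (cellc_p_dvd hℓ1 hx)
  have hΔ : IsUnit Y.det := isUnit_det_GL y
  have hD : IsUnit X.det := isUnit_det_GL x
  have hdetz : X.det = Y.det * Z.det := detmul y x
  have hDz : IsUnit Z.det := isUnit_of_mul_isUnit_right (hdetz ▸ hD)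
  obtain ⟨w, hw⟩ := cellc_p_dvd hℓ1 hx
  -- E = Y11 X00 - Y01 X10 is a unit
  have hE : IsUnit (Y 1 1 * X 0 0 - Y 0 1 * X 1 0) := by
    have h2 : Y 1 1 * X 0 0 - Y 0 1 * X 1 0
        = Y 1 1 * X 0 0 + (p : ZMod (p ^ n)) * (-(Y 0 1 * w)) := by
      rw [hw]; ring
    rw [h2]; exact isUnit_add_p_mul hn (hd.mul hα) _
  have hz00eq : Y.det * Z 0 0 = Y 1 1 * X 0 0 - Y 0 1 * X 1 0 := solve00 y x
  have hz00 : IsUnit (Z 0 0) := isUnit_of_mul_isUnit_right (hz00eq ▸ hE)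
  -- key identity: α Δ = a E + Y01 * s
  obtain ⟨t, ht⟩ := hs
  have hF : IsUnit (Y 0 0 * (Y 1 1 * X 0 0 - Y 0 1 * X 1 0)) := ha.mul hE
  have hFi : Y 0 0 * (Y 1 1 * X 0 0 - Y 0 1 * X 1 0) * ↑hF.unit⁻¹ = 1 := hF.mul_val_inv
  set q : ZMod (p ^ n) := Y 0 1 * (Y 0 0 * X 1 0 - Y 1 0 * X 0 0) with hq
  have hu₀ : IsUnit (1 + ↑hF.unit⁻¹ * q) := by
    have h3 : (1 : ZMod (p ^ n)) + ↑hF.unit⁻¹ * q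
        = 1 + (p : ZMod (p ^ n)) * (↑hF.unit⁻¹ * (Y 0 1 * ((p : ZMod (p ^ n)) ^ (r - 1) * t))) := by
      rw [hq, ht]
      have hpr : (p : ZMod (p ^ n)) ^ r = (p : ZMod (p ^ n)) * (p : ZMod (p ^ n)) ^ (r - 1) := by
        conv_lhs => rw [show r = 1 + (r - 1) by omega]
        rw [pow_add, pow_one]
      rw [hpr]; ring
    rw [h3]; exact isUnit_add_p_mul hn isUnit_one _
  have hchi1 : chiE χ (1 + ↑hF.unit⁻¹ * q) = 1 := by
    have h4 : chiE χ (1 + ↑hF.unit⁻¹ * q) = chiE χ ((hu₀.unit : (ZMod (p ^ n))ˣ) : ZMod (p ^ n)) := by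
      rw [hu₀.unit_spec]
    rw [h4, chiE_unit, hχ1, Units.val_one]
    rw [hu₀.unit_spec]
    have : (1 : ZMod (p ^ n)) + ↑hF.unit⁻¹ * q - 1 = ↑hF.unit⁻¹ * q := by ring
    rw [this, hq, ht]
    exact ⟨↑hF.unit⁻¹ * (Y 0 1 * t), by ring⟩
  have hαΔ : X 0 0 * Y.det
      = (Y 0 0 * (Y 1 1 * X 0 0 - Y 0 1 * X 1 0)) * (1 + ↑hF.unit⁻¹ * q) := by
    have hdet2 : Y.det = Y 0 0 * Y 1 1 - Y 0 1 * Y 1 0 := Matrix.det_fin_two Y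
    rw [hq]
    linear_combination hdet2 * X 0 0 - q * hFi
  -- chiE relations
  have c1 : chiE χ X.det = chiE χ Y.det * chiE χ Z.det := by
    rw [hdetz]; exact chiE_mul χ hΔ hDz
  have c2 : chiE χ (Y 1 1 * X 0 0 - Y 0 1 * X 1 0) = chiE χ Y.det * chiE χ (Z 0 0) := by
    rw [← hz00eq]; exact chiE_mul χ hΔ hz00
  have c3 : chiE χ (X 0 0) * chiE χ Y.det
      = chiE χ (Y 0 0) * chiE χ (Y 1 1 * X 0 0 - Y 0 1 * X 1 0) := by
    rw [← chiE_mul χ hα hΔ, ← chiE_mul χ ha hE, hαΔ, chiE_mul χ hF hu₀, hchi1, mul_one]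
  have c4 : chiE χ (X 0 0) = chiE χ (Y 0 0) * chiE χ (Z 0 0) := by
    apply mul_right_cancel₀ (chiE_ne_zero χ hΔ)
    linear_combination c3 + chiE χ (Y 0 0) * c2
  have n1 := chiE_ne_zero χ ha
  have n2 := chiE_ne_zero χ hα
  have n3 := chiE_ne_zero χ hz00
  rw [div_mul_div_comm, div_eq_div_iff (mul_ne_zero n1 n3) n2]
  linear_combination (chiE χ Y.det * chiE χ Z.det) * c4 - (chiE χ (Y 0 0) * chiE χ (Z 0 0)) * c1

lemma pow_p_split {k : ℕ} (hk : 1 ≤ k) :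
    (p : ZMod (p ^ n)) ^ k = (p : ZMod (p ^ n)) * (p : ZMod (p ^ n)) ^ (k - 1) := by
  conv_lhs => rw [show k = 1 + (k - 1) by omega]
  rw [pow_add, pow_one]

lemma det_unit_lower (hn : 1 ≤ n) (a d : (ZMod (p ^ n))ˣ) (β : ZMod (p ^ n)) {c : ZMod (p ^ n)}
    (hc : (p : ZMod (p ^ n)) ∣ c) :
    IsUnit (!![(a : ZMod (p ^ n)), β; c, (d : ZMod (p ^ n))]).det := by
  obtain ⟨c', rfl⟩ := hc
  have h2 : (!![(a : ZMod (p ^ n)), β; (p : ZMod (p ^ n)) * c', (d : ZMod (p ^ n))]).det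
      = (a : ZMod (p ^ n)) * (d : ZMod (p ^ n)) + (p : ZMod (p ^ n)) * (-(β * c')) := by
    rw [Matrix.det_fin_two]
    norm_num
    ring
  rw [h2]
  exact isUnit_add_p_mul hn (a.isUnit.mul d.isUnit) _

lemma cardB_eq (R : Type*) [CommRing R] :
    cardB R = Nat.card (Rˣ × R × Rˣ) := by
  rw [cardB]
  refine (Nat.card_eq_of_bijective
    (fun t : Rˣ × R × Rˣ => (⟨mkGL !![(t.1 : R), t.2.1; 0, (t.2.2 : R)]
      (by rw [det_upper _ (by simp)]; simpa using t.1.isUnit.mul t.2.2.isUnit), by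
        show (_ : Matrix (Fin 2) (Fin 2) R) 1 0 = 0
        rw [coe_mkGL]; simp⟩ : {g : GL (Fin 2) R // inB g})) ⟨?_, ?_⟩).symm
  · rintro ⟨a₁, b₁, d₁⟩ ⟨a₂, b₂, d₂⟩ h
    have h' := congrArg (fun z : {g : GL (Fin 2) R // inB g} =>
      ((z.1 : Matrix (Fin 2) (Fin 2) R))) h
    simp only [coe_mkGL] at h'
    have e00 := congrFun (congrFun h' 0) 0
    have e01 := congrFun (congrFun h' 0) 1
    have e11 := congrFun (congrFun h' 1) 1
    simp at e00 e01 e11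
    ext <;> simp_all
  · rintro ⟨g, hg⟩
    have hd : (g : Matrix (Fin 2) (Fin 2) R).det
        = (g : Matrix (Fin 2) (Fin 2) R) 0 0 * (g : Matrix (Fin 2) (Fin 2) R) 1 1 :=
      det_upper _ hg
    have hu := isUnit_det_GL g
    rw [hd] at hu
    have ha : IsUnit ((g : Matrix (Fin 2) (Fin 2) R) 0 0) := isUnit_of_mul_isUnit_left hu
    have hdd : IsUnit ((g : Matrix (Fin 2) (Fin 2) R) 1 1) := by
      rw [mul_comm] at hu; exact isUnit_of_mul_isUnit_left hu
    refine ⟨⟨ha.unit, (g : Matrix (Fin 2) (Fin 2) R) 0 1, hdd.unit⟩, ?_⟩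
    apply Subtype.ext
    apply Units.ext
    show (_ : Matrix (Fin 2) (Fin 2) R) = _
    rw [coe_mkGL]
    ext i j
    fin_cases i <;> fin_cases j <;>
      simp [IsUnit.unit_spec, hg]
    · exact (hg).symm


lemma card_S1 (hn : 1 ≤ n) {ℓ j : ℕ} (hℓ1 : 1 ≤ ℓ) (hℓj : ℓ < j)
    (x : GL (Fin 2) (ZMod (p ^ n)))
    (hx : cellc p n ℓ ((x : Matrix (Fin 2) (Fin 2) (ZMod (p ^ n))) 1 0)) :
    Nat.card ((ZMod (p ^ n))ˣ × (ZMod (p ^ n))ˣ × ZMod (p ^ n)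
        × {s : ZMod (p ^ n) // cellc p n j s})
      = Nat.card {y : GL (Fin 2) (ZMod (p ^ n)) //
          cellc p n ℓ ((y : Matrix (Fin 2) (Fin 2) (ZMod (p ^ n))) 1 0)
            ∧ cellc p n j ((↑(y⁻¹ * x) : Matrix (Fin 2) (Fin 2) (ZMod (p ^ n))) 1 0)} := by
  set X := ((x : Matrix (Fin 2) (Fin 2) (ZMod (p ^ n)))) with hXdef
  obtain ⟨hα, -⟩ := units_of_dvd10 hn (cellc_p_dvd hℓ1 hx)
  obtain ⟨wu, hwu⟩ := hx
  set αi := ((hα.unit⁻¹ : (ZMod (p ^ n))ˣ) : ZMod (p ^ n)) with hαidef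
  have hαiα : αi * X 0 0 = 1 := hα.val_inv_mul
  set C : (ZMod (p ^ n))ˣ × (ZMod (p ^ n))ˣ × ZMod (p ^ n)
      × {s : ZMod (p ^ n) // cellc p n j s} → ZMod (p ^ n) :=
    fun t => αi * ((t.1 : ZMod (p ^ n)) * X 1 0 - (t.2.2.2 : ZMod (p ^ n))) with hC
  have hpj : (p : ZMod (p ^ n)) ^ j
      = (p : ZMod (p ^ n)) ^ ℓ * ((p : ZMod (p ^ n)) * (p : ZMod (p ^ n)) ^ (j - ℓ - 1)) := by
    conv_lhs => rw [show j = ℓ + (1 + (j - ℓ - 1)) by omega]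
    rw [pow_add, pow_add, pow_one]
  have hcd : ∀ t, (p : ZMod (p ^ n)) ∣ C t := by
    rintro ⟨a, d, β, s, su, hsu⟩
    rw [hC]
    simp only
    rw [hwu, hsu, pow_p_split hℓ1, pow_p_split (show 1 ≤ j by omega)]
    exact ⟨αi * ((a : ZMod (p ^ n)) * ((p : ZMod (p ^ n)) ^ (ℓ - 1) * wu)
      - (p : ZMod (p ^ n)) ^ (j - 1) * su), by ring⟩
  apply Nat.card_eq_of_bijective (fun t =>
    ⟨mkGL !![(t.1 : ZMod (p ^ n)), t.2.2.1; C t, (t.2.1 : ZMod (p ^ n))]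
        (det_unit_lower hn t.1 t.2.1 t.2.2.1 (hcd t)), by
      -- cell ℓ condition
      rw [coe_mkGL]
      have hent : (!![(t.1 : ZMod (p ^ n)), t.2.2.1; C t, (t.2.1 : ZMod (p ^ n))]
          : Matrix (Fin 2) (Fin 2) (ZMod (p ^ n))) 1 0 = C t := by norm_num
      rw [hent]
      obtain ⟨a, d, β, s, su, hsu⟩ := t
      have hinner : IsUnit ((a : ZMod (p ^ n)) * (wu : ZMod (p ^ n))
          + (p : ZMod (p ^ n)) * (-((p : ZMod (p ^ n)) ^ (j - ℓ - 1) * su))) :=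
        isUnit_add_p_mul hn (a.isUnit.mul wu.isUnit) _
      refine ⟨hα.unit⁻¹ * hinner.unit, ?_⟩
      rw [hC]
      simp only
      rw [hwu, hsu, hpj, Units.val_mul, IsUnit.unit_spec]
      ring, by
      -- cell j condition for z = y⁻¹ x
      have hdetu := isUnit_det_GL (mkGL !![(t.1 : ZMod (p ^ n)), t.2.2.1; C t,
        (t.2.1 : ZMod (p ^ n))] (det_unit_lower hn t.1 t.2.1 t.2.2.1 (hcd t)))
      obtain ⟨a, d, β, s, su, hsu⟩ := t
      have hsol := solve10 (mkGL !![(a : ZMod (p ^ n)), β;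
        C (a, d, β, ⟨s, su, hsu⟩), (d : ZMod (p ^ n))]
        (det_unit_lower hn a d β (hcd (a, d, β, ⟨s, su, hsu⟩)))) x
      rw [coe_mkGL] at hsol hdetu
      have h00 : (!![(a : ZMod (p ^ n)), β; C (a, d, β, ⟨s, su, hsu⟩), (d : ZMod (p ^ n))]
          : Matrix (Fin 2) (Fin 2) (ZMod (p ^ n))) 0 0 = (a : ZMod (p ^ n)) := by norm_num
      have h10 : (!![(a : ZMod (p ^ n)), β; C (a, d, β, ⟨s, su, hsu⟩), (d : ZMod (p ^ n))]
          : Matrix (Fin 2) (Fin 2) (ZMod (p ^ n))) 1 0 = C (a, d, β, ⟨s, su, hsu⟩) := by norm_num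
      rw [h00, h10] at hsol
      have hrhs : (a : ZMod (p ^ n)) * X 1 0 - C (a, d, β, ⟨s, su, hsu⟩) * X 0 0 = s := by
        rw [hC]
        simp only
        linear_combination (-((a : ZMod (p ^ n)) * X 1 0 - s)) * hαiα
      rw [hrhs] at hsol
      have hsol3 := hsol.trans hsu
      refine ⟨hdetu.unit⁻¹ * su, ?_⟩
      have hzeq : (↑((mkGL !![(a : ZMod (p ^ n)), β; C (a, d, β, ⟨s, su, hsu⟩),
            (d : ZMod (p ^ n))] (det_unit_lower hn a d β (hcd (a, d, β, ⟨s, su, hsu⟩))))⁻¹ * x)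
          : Matrix (Fin 2) (Fin 2) (ZMod (p ^ n))) 1 0
          = ((hdetu.unit⁻¹ : (ZMod (p ^ n))ˣ) : ZMod (p ^ n))
            * ((p : ZMod (p ^ n)) ^ j * (su : ZMod (p ^ n))) := by
        rw [← hsol3, ← mul_assoc]
        rw [show ((hdetu.unit⁻¹ : (ZMod (p ^ n))ˣ) : ZMod (p ^ n))
            * (!![(a : ZMod (p ^ n)), β; C (a, d, β, ⟨s, su, hsu⟩),
              (d : ZMod (p ^ n))]).det = 1 from hdetu.val_inv_mul, one_mul]
      rw [hzeq, Units.val_mul]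
      ring⟩) ?_
  constructor
  · rintro ⟨a₁, d₁, β₁, s₁, hs₁⟩ ⟨a₂, d₂, β₂, s₂, hs₂⟩ h
    have hmat := congrArg (fun z : {y : GL (Fin 2) (ZMod (p ^ n)) //
        cellc p n ℓ ((y : Matrix (Fin 2) (Fin 2) (ZMod (p ^ n))) 1 0)
          ∧ cellc p n j ((↑(y⁻¹ * x) : Matrix (Fin 2) (Fin 2) (ZMod (p ^ n))) 1 0)} =>
      ((z.1 : GL (Fin 2) (ZMod (p ^ n))) : Matrix (Fin 2) (Fin 2) (ZMod (p ^ n)))) h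
    simp only [coe_mkGL] at hmat
    have e00 := congrFun (congrFun hmat 0) 0
    have e01 := congrFun (congrFun hmat 0) 1
    have e10 := congrFun (congrFun hmat 1) 0
    have e11 := congrFun (congrFun hmat 1) 1
    rw [hC] at e10
    norm_num at e00 e01 e10 e11
    have hs : (s₁ : ZMod (p ^ n)) = (s₂ : ZMod (p ^ n)) := by
      rw [e00] at e10
      linear_combination (-(X 0 0)) * e10
        - ((a₂ : ZMod (p ^ n)) * X 1 0 - (s₂ : ZMod (p ^ n))
          - ((a₂ : ZMod (p ^ n)) * X 1 0 - (s₁ : ZMod (p ^ n)))) * hαiα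
    simp only [Prod.mk.injEq]
    exact ⟨Units.ext e00, Units.ext e11, e01, Subtype.ext hs⟩
  · rintro ⟨y, ⟨cu, hcu⟩, ⟨zu, hzu⟩⟩
    have hpc : (p : ZMod (p ^ n)) ∣ (y : Matrix (Fin 2) (Fin 2) (ZMod (p ^ n))) 1 0 :=
      cellc_p_dvd hℓ1 ⟨cu, hcu⟩
    obtain ⟨ha, hd⟩ := units_of_dvd10 hn hpc
    have hΔ := isUnit_det_GL y
    refine ⟨⟨ha.unit, hd.unit, (y : Matrix (Fin 2) (Fin 2) (ZMod (p ^ n))) 0 1,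
      ⟨(y : Matrix (Fin 2) (Fin 2) (ZMod (p ^ n))) 0 0 * X 1 0
        - (y : Matrix (Fin 2) (Fin 2) (ZMod (p ^ n))) 1 0 * X 0 0, ?_⟩⟩, ?_⟩
    · refine ⟨hΔ.unit * zu, ?_⟩
      rw [← solve10 y x, hzu, Units.val_mul, IsUnit.unit_spec]
      ring
    · apply Subtype.ext
      apply Units.ext
      simp only [coe_mkGL]
      ext i k
      fin_cases i <;> fin_cases k <;>
        norm_num [hC, IsUnit.unit_spec]
      linear_combination ((y : Matrix (Fin 2) (Fin 2) (ZMod (p ^ n))) 1 0) * hαiα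

lemma card_S2 (hn : 1 ≤ n) {ℓ j : ℕ} (hℓ1 : 1 ≤ ℓ) (hℓj : ℓ < j)
    (x : GL (Fin 2) (ZMod (p ^ n)))
    (hx : cellc p n ℓ ((x : Matrix (Fin 2) (Fin 2) (ZMod (p ^ n))) 1 0)) :
    Nat.card ((ZMod (p ^ n))ˣ × (ZMod (p ^ n))ˣ × ZMod (p ^ n)
        × {s : ZMod (p ^ n) // cellc p n j s})
      = Nat.card {y : GL (Fin 2) (ZMod (p ^ n)) //
          cellc p n j ((y : Matrix (Fin 2) (Fin 2) (ZMod (p ^ n))) 1 0)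
            ∧ cellc p n ℓ ((↑(y⁻¹ * x) : Matrix (Fin 2) (Fin 2) (ZMod (p ^ n))) 1 0)} := by
  set X := ((x : Matrix (Fin 2) (Fin 2) (ZMod (p ^ n)))) with hXdef
  obtain ⟨hα, -⟩ := units_of_dvd10 hn (cellc_p_dvd hℓ1 hx)
  obtain ⟨wu, hwu⟩ := hx
  have hpj : (p : ZMod (p ^ n)) ^ j
      = (p : ZMod (p ^ n)) ^ ℓ * ((p : ZMod (p ^ n)) * (p : ZMod (p ^ n)) ^ (j - ℓ - 1)) := by
    conv_lhs => rw [show j = ℓ + (1 + (j - ℓ - 1)) by omega]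
    rw [pow_add, pow_add, pow_one]
  have hj1 : 1 ≤ j := by omega
  apply Nat.card_eq_of_bijective (fun t =>
    ⟨mkGL !![(t.1 : ZMod (p ^ n)), t.2.2.1; (t.2.2.2 : ZMod (p ^ n)), (t.2.1 : ZMod (p ^ n))]
        (det_unit_lower hn t.1 t.2.1 t.2.2.1 (cellc_p_dvd hj1 t.2.2.2.2)), by
      rw [coe_mkGL]
      have hent : (!![(t.1 : ZMod (p ^ n)), t.2.2.1; (t.2.2.2 : ZMod (p ^ n)),
          (t.2.1 : ZMod (p ^ n))] : Matrix (Fin 2) (Fin 2) (ZMod (p ^ n))) 1 0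
          = (t.2.2.2 : ZMod (p ^ n)) := by norm_num
      rw [hent]
      exact t.2.2.2.2, by
      have hdetu := isUnit_det_GL (mkGL !![(t.1 : ZMod (p ^ n)), t.2.2.1;
        (t.2.2.2 : ZMod (p ^ n)), (t.2.1 : ZMod (p ^ n))]
        (det_unit_lower hn t.1 t.2.1 t.2.2.1 (cellc_p_dvd hj1 t.2.2.2.2)))
      obtain ⟨a, d, β, s, su, hsu⟩ := t
      have hsol := solve10 (mkGL !![(a : ZMod (p ^ n)), β; s, (d : ZMod (p ^ n))]
        (det_unit_lower hn a d β (cellc_p_dvd hj1 ⟨su, hsu⟩))) x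
      rw [coe_mkGL] at hsol hdetu
      have h00 : (!![(a : ZMod (p ^ n)), β; s, (d : ZMod (p ^ n))]
          : Matrix (Fin 2) (Fin 2) (ZMod (p ^ n))) 0 0 = (a : ZMod (p ^ n)) := by norm_num
      have h10 : (!![(a : ZMod (p ^ n)), β; s, (d : ZMod (p ^ n))]
          : Matrix (Fin 2) (Fin 2) (ZMod (p ^ n))) 1 0 = s := by norm_num
      rw [h00, h10] at hsol
      have hinner : IsUnit ((a : ZMod (p ^ n)) * (wu : ZMod (p ^ n))
          + (p : ZMod (p ^ n)) * (-((p : ZMod (p ^ n)) ^ (j - ℓ - 1) * su * X 0 0))) :=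
        isUnit_add_p_mul hn (a.isUnit.mul wu.isUnit) _
      have hrhs : (a : ZMod (p ^ n)) * X 1 0 - s * X 0 0
          = (p : ZMod (p ^ n)) ^ ℓ * ((hinner.unit : (ZMod (p ^ n))ˣ) : ZMod (p ^ n)) := by
        rw [IsUnit.unit_spec, hwu, hsu, hpj]
        ring
      rw [hrhs] at hsol
      refine ⟨hdetu.unit⁻¹ * hinner.unit, ?_⟩
      have hzeq : (↑((mkGL !![(a : ZMod (p ^ n)), β; s, (d : ZMod (p ^ n))]
            (det_unit_lower hn a d β (cellc_p_dvd hj1 ⟨su, hsu⟩)))⁻¹ * x)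
          : Matrix (Fin 2) (Fin 2) (ZMod (p ^ n))) 1 0
          = ((hdetu.unit⁻¹ : (ZMod (p ^ n))ˣ) : ZMod (p ^ n))
            * ((p : ZMod (p ^ n)) ^ ℓ * ((hinner.unit : (ZMod (p ^ n))ˣ) : ZMod (p ^ n))) := by
        rw [← hsol, ← mul_assoc]
        rw [show ((hdetu.unit⁻¹ : (ZMod (p ^ n))ˣ) : ZMod (p ^ n))
            * (!![(a : ZMod (p ^ n)), β; s, (d : ZMod (p ^ n))]).det = 1
          from hdetu.val_inv_mul, one_mul]
      rw [hzeq, Units.val_mul]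
      ring⟩) ?_
  constructor
  · rintro ⟨a₁, d₁, β₁, s₁, hs₁⟩ ⟨a₂, d₂, β₂, s₂, hs₂⟩ h
    have hmat := congrArg (fun z : {y : GL (Fin 2) (ZMod (p ^ n)) //
        cellc p n j ((y : Matrix (Fin 2) (Fin 2) (ZMod (p ^ n))) 1 0)
          ∧ cellc p n ℓ ((↑(y⁻¹ * x) : Matrix (Fin 2) (Fin 2) (ZMod (p ^ n))) 1 0)} =>
      ((z.1 : GL (Fin 2) (ZMod (p ^ n))) : Matrix (Fin 2) (Fin 2) (ZMod (p ^ n)))) h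
    simp only [coe_mkGL] at hmat
    have e00 := congrFun (congrFun hmat 0) 0
    have e01 := congrFun (congrFun hmat 0) 1
    have e10 := congrFun (congrFun hmat 1) 0
    have e11 := congrFun (congrFun hmat 1) 1
    norm_num at e00 e01 e10 e11
    simp only [Prod.mk.injEq]
    exact ⟨Units.ext e00, Units.ext e11, e01, Subtype.ext e10⟩
  · rintro ⟨y, ⟨cu, hcu⟩, hz⟩
    have hpc : (p : ZMod (p ^ n)) ∣ (y : Matrix (Fin 2) (Fin 2) (ZMod (p ^ n))) 1 0 :=
      cellc_p_dvd hj1 ⟨cu, hcu⟩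
    obtain ⟨ha, hd⟩ := units_of_dvd10 hn hpc
    refine ⟨⟨ha.unit, hd.unit, (y : Matrix (Fin 2) (Fin 2) (ZMod (p ^ n))) 0 1,
      ⟨(y : Matrix (Fin 2) (Fin 2) (ZMod (p ^ n))) 1 0, ⟨cu, hcu⟩⟩⟩, ?_⟩
    apply Subtype.ext
    apply Units.ext
    simp only [coe_mkGL]
    ext i k
    fin_cases i <;> fin_cases k <;>
      norm_num [IsUnit.unit_spec]


lemma Vexp_of_cell {χ : (ZMod (p ^ n))ˣ →* ℂˣ} {m : ℕ} (g : GL (Fin 2) (ZMod (p ^ n)))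
    (h : cellc p n m ((g : Matrix (Fin 2) (Fin 2) (ZMod (p ^ n))) 1 0)) :
    Vexp p n χ m g = chiE χ ((g : Matrix (Fin 2) (Fin 2) (ZMod (p ^ n))).det)
      / chiE χ ((g : Matrix (Fin 2) (Fin 2) (ZMod (p ^ n))) 0 0) := by
  rw [Vexp, if_pos h]

lemma Vexp_of_not {χ : (ZMod (p ^ n))ˣ →* ℂˣ} {m : ℕ} (g : GL (Fin 2) (ZMod (p ^ n)))
    (h : ¬ cellc p n m ((g : Matrix (Fin 2) (Fin 2) (ZMod (p ^ n))) 1 0)) :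
    Vexp p n χ m g = 0 := by
  rw [Vexp, if_neg h]

lemma inB_one : inB (1 : GL (Fin 2) (ZMod (p ^ n))) := by
  show ((1 : GL (Fin 2) (ZMod (p ^ n))) : Matrix (Fin 2) (Fin 2) (ZMod (p ^ n))) 1 0 = 0
  rw [Units.val_one]
  exact Matrix.one_apply_ne (by decide)

lemma cardB_pos : 0 < cardB (ZMod (p ^ n)) := by
  rw [cardB]
  haveI : Nonempty {g : GL (Fin 2) (ZMod (p ^ n)) // inB g} := ⟨⟨1, inB_one⟩⟩
  exact Nat.card_pos

lemma conv_Vexp₁ (hn : 1 ≤ n) {r ℓ j : ℕ} (hr : 1 ≤ r)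
    {χ : (ZMod (p ^ n))ˣ →* ℂˣ}
    (hχ1 : ∀ u : (ZMod (p ^ n))ˣ, (p : ZMod (p ^ n)) ^ r ∣ ((u : ZMod (p ^ n)) - 1) → χ u = 1)
    (hrℓ : r ≤ ℓ) (hℓj : ℓ < j) (hjn : j < n)
    (x : GL (Fin 2) (ZMod (p ^ n))) :
    conv (Vexp p n χ ℓ) (Vexp p n χ j) x
      = ((p ^ (n - j - 1) * (p - 1) : ℕ) : ℂ) * Vexp p n χ ℓ x := by
  classical
  have hℓ1 : 1 ≤ ℓ := le_trans hr hrℓ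
  have hj1 : 1 ≤ j := by omega
  have hpj : (p : ZMod (p ^ n)) ^ j
      = (p : ZMod (p ^ n)) ^ ℓ * ((p : ZMod (p ^ n)) * (p : ZMod (p ^ n)) ^ (j - ℓ - 1)) := by
    conv_lhs => rw [show j = ℓ + (1 + (j - ℓ - 1)) by omega]
    rw [pow_add, pow_add, pow_one]
  rw [conv]
  by_cases hx : cellc p n ℓ ((x : Matrix (Fin 2) (Fin 2) (ZMod (p ^ n))) 1 0)
  · set P : GL (Fin 2) (ZMod (p ^ n)) → Prop := fun y =>
      cellc p n ℓ ((y : Matrix (Fin 2) (Fin 2) (ZMod (p ^ n))) 1 0)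
        ∧ cellc p n j ((↑(y⁻¹ * x) : Matrix (Fin 2) (Fin 2) (ZMod (p ^ n))) 1 0) with hPdef
    have hsplit : ∑ y : GL (Fin 2) (ZMod (p ^ n)), Vexp p n χ ℓ y * Vexp p n χ j (y⁻¹ * x)
        = ∑ y ∈ Finset.univ.filter P, Vexp p n χ ℓ y * Vexp p n χ j (y⁻¹ * x) := by
      symm
      apply Finset.sum_filter_of_ne
      intro y _ hne
      constructor
      · by_contra hcon
        exact hne (by rw [Vexp_of_not _ hcon, zero_mul])
      · by_contra hcon
        exact hne (by rw [Vexp_of_not _ hcon, mul_zero])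
    have hterm : ∀ y ∈ Finset.univ.filter P,
        Vexp p n χ ℓ y * Vexp p n χ j (y⁻¹ * x)
          = chiE χ ((x : Matrix (Fin 2) (Fin 2) (ZMod (p ^ n))).det)
            / chiE χ ((x : Matrix (Fin 2) (Fin 2) (ZMod (p ^ n))) 0 0) := by
      intro y hy
      obtain ⟨h1, h2⟩ := (Finset.mem_filter.mp hy).2
      rw [Vexp_of_cell _ h1, Vexp_of_cell _ h2]
      exact term_eq hn hr hχ1 hℓ1 x y hx (cellc_p_dvd hℓ1 h1)
        (dvd_sub (Dvd.dvd.mul_left (cellc_dvd hrℓ hx) _)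
          (Dvd.dvd.mul_right (cellc_dvd hrℓ h1) _))
    rw [hsplit, Finset.sum_congr rfl hterm, Finset.sum_const]
    have hcard : (Finset.univ.filter P).card
        = cardB (ZMod (p ^ n)) * (p ^ (n - j - 1) * (p - 1)) := by
      have h1 : (Finset.univ.filter P).card = Nat.card {y : GL (Fin 2) (ZMod (p ^ n)) // P y} := by
        rw [Nat.card_eq_fintype_card, Fintype.card_subtype]
      rw [h1, ← card_S1 hn hℓ1 hℓj x hx, cardB_eq]
      simp only [Nat.card_prod]
      rw [card_cellc hn hjn]
      ring
    rw [hcard, Vexp_of_cell _ hx, nsmul_eq_mul]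
    have hB0 : ((cardB (ZMod (p ^ n)) : ℂ)) ≠ 0 :=
      Nat.cast_ne_zero.mpr (cardB_pos (p := p) (n := n)).ne'
    rw [inv_mul_eq_iff_eq_mul₀ hB0]
    push_cast
    ring
  · rw [Finset.sum_eq_zero, mul_zero, Vexp_of_not _ hx, mul_zero]
    intro y _
    by_cases h1 : cellc p n ℓ ((y : Matrix (Fin 2) (Fin 2) (ZMod (p ^ n))) 1 0)
    · by_cases h2 : cellc p n j ((↑(y⁻¹ * x) : Matrix (Fin 2) (Fin 2) (ZMod (p ^ n))) 1 0)
      · exfalso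
        apply hx
        have hyz : y * (y⁻¹ * x) = x := mul_inv_cancel_left y x
        have hent := entry10_mul y (y⁻¹ * x)
        rw [hyz] at hent
        obtain ⟨cu, hcu⟩ := h1
        obtain ⟨zu, hzu⟩ := h2
        obtain ⟨hz00, -⟩ := units_of_dvd10 hn (cellc_p_dvd hj1 ⟨zu, hzu⟩)
        have hinner : IsUnit ((cu : ZMod (p ^ n))
            * ((↑(y⁻¹ * x) : Matrix (Fin 2) (Fin 2) (ZMod (p ^ n))) 0 0)
            + (p : ZMod (p ^ n)) * ((p : ZMod (p ^ n)) ^ (j - ℓ - 1)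
              * ((y : Matrix (Fin 2) (Fin 2) (ZMod (p ^ n))) 1 1 * zu))) :=
          isUnit_add_p_mul hn (cu.isUnit.mul hz00) _
        refine ⟨hinner.unit, ?_⟩
        rw [hent, hcu, hzu, hpj, IsUnit.unit_spec]
        ring
      · rw [Vexp_of_not _ h2, mul_zero]
    · rw [Vexp_of_not _ h1, zero_mul]

lemma conv_Vexp₂ (hn : 1 ≤ n) {r ℓ j : ℕ} (hr : 1 ≤ r)
    {χ : (ZMod (p ^ n))ˣ →* ℂˣ}
    (hχ1 : ∀ u : (ZMod (p ^ n))ˣ, (p : ZMod (p ^ n)) ^ r ∣ ((u : ZMod (p ^ n)) - 1) → χ u = 1)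
    (hrℓ : r ≤ ℓ) (hℓj : ℓ < j) (hjn : j < n)
    (x : GL (Fin 2) (ZMod (p ^ n))) :
    conv (Vexp p n χ j) (Vexp p n χ ℓ) x
      = ((p ^ (n - j - 1) * (p - 1) : ℕ) : ℂ) * Vexp p n χ ℓ x := by
  classical
  have hℓ1 : 1 ≤ ℓ := le_trans hr hrℓ
  have hj1 : 1 ≤ j := by omega
  have hrj : r ≤ j := by omega
  have hpj : (p : ZMod (p ^ n)) ^ j
      = (p : ZMod (p ^ n)) ^ ℓ * ((p : ZMod (p ^ n)) * (p : ZMod (p ^ n)) ^ (j - ℓ - 1)) := by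
    conv_lhs => rw [show j = ℓ + (1 + (j - ℓ - 1)) by omega]
    rw [pow_add, pow_add, pow_one]
  rw [conv]
  by_cases hx : cellc p n ℓ ((x : Matrix (Fin 2) (Fin 2) (ZMod (p ^ n))) 1 0)
  · set P : GL (Fin 2) (ZMod (p ^ n)) → Prop := fun y =>
      cellc p n j ((y : Matrix (Fin 2) (Fin 2) (ZMod (p ^ n))) 1 0)
        ∧ cellc p n ℓ ((↑(y⁻¹ * x) : Matrix (Fin 2) (Fin 2) (ZMod (p ^ n))) 1 0) with hPdef
    have hsplit : ∑ y : GL (Fin 2) (ZMod (p ^ n)), Vexp p n χ j y * Vexp p n χ ℓ (y⁻¹ * x)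
        = ∑ y ∈ Finset.univ.filter P, Vexp p n χ j y * Vexp p n χ ℓ (y⁻¹ * x) := by
      symm
      apply Finset.sum_filter_of_ne
      intro y _ hne
      constructor
      · by_contra hcon
        exact hne (by rw [Vexp_of_not _ hcon, zero_mul])
      · by_contra hcon
        exact hne (by rw [Vexp_of_not _ hcon, mul_zero])
    have hterm : ∀ y ∈ Finset.univ.filter P,
        Vexp p n χ j y * Vexp p n χ ℓ (y⁻¹ * x)
          = chiE χ ((x : Matrix (Fin 2) (Fin 2) (ZMod (p ^ n))).det)
            / chiE χ ((x : Matrix (Fin 2) (Fin 2) (ZMod (p ^ n))) 0 0) := by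
      intro y hy
      obtain ⟨h1, h2⟩ := (Finset.mem_filter.mp hy).2
      rw [Vexp_of_cell _ h1, Vexp_of_cell _ h2]
      exact term_eq hn hr hχ1 hℓ1 x y hx (cellc_p_dvd hj1 h1)
        (dvd_sub (Dvd.dvd.mul_left (cellc_dvd hrℓ hx) _)
          (Dvd.dvd.mul_right (cellc_dvd hrj h1) _))
    rw [hsplit, Finset.sum_congr rfl hterm, Finset.sum_const]
    have hcard : (Finset.univ.filter P).card
        = cardB (ZMod (p ^ n)) * (p ^ (n - j - 1) * (p - 1)) := by
      have h1 : (Finset.univ.filter P).card = Nat.card {y : GL (Fin 2) (ZMod (p ^ n)) // P y} := by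
        rw [Nat.card_eq_fintype_card, Fintype.card_subtype]
      rw [h1, ← card_S2 hn hℓ1 hℓj x hx, cardB_eq]
      simp only [Nat.card_prod]
      rw [card_cellc hn hjn]
      ring
    rw [hcard, Vexp_of_cell _ hx, nsmul_eq_mul]
    have hB0 : ((cardB (ZMod (p ^ n)) : ℂ)) ≠ 0 :=
      Nat.cast_ne_zero.mpr (cardB_pos (p := p) (n := n)).ne'
    rw [inv_mul_eq_iff_eq_mul₀ hB0]
    push_cast
    ring
  · rw [Finset.sum_eq_zero, mul_zero, Vexp_of_not _ hx, mul_zero]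
    intro y _
    by_cases h1 : cellc p n j ((y : Matrix (Fin 2) (Fin 2) (ZMod (p ^ n))) 1 0)
    · by_cases h2 : cellc p n ℓ ((↑(y⁻¹ * x) : Matrix (Fin 2) (Fin 2) (ZMod (p ^ n))) 1 0)
      · exfalso
        apply hx
        have hyz : y * (y⁻¹ * x) = x := mul_inv_cancel_left y x
        have hent := entry10_mul y (y⁻¹ * x)
        rw [hyz] at hent
        obtain ⟨cu, hcu⟩ := h1
        obtain ⟨zu, hzu⟩ := h2
        obtain ⟨-, hd⟩ := units_of_dvd10 hn (cellc_p_dvd hj1 ⟨cu, hcu⟩)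
        obtain ⟨hz00, -⟩ := units_of_dvd10 hn (cellc_p_dvd hℓ1 ⟨zu, hzu⟩)
        have hinner : IsUnit ((y : Matrix (Fin 2) (Fin 2) (ZMod (p ^ n))) 1 1 * (zu : ZMod (p ^ n))
            + (p : ZMod (p ^ n)) * ((p : ZMod (p ^ n)) ^ (j - ℓ - 1)
              * ((cu : ZMod (p ^ n)) * ((↑(y⁻¹ * x) : Matrix (Fin 2) (Fin 2) (ZMod (p ^ n))) 0 0)))) :=
          isUnit_add_p_mul hn (hd.mul zu.isUnit) _
        refine ⟨hinner.unit, ?_⟩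
        rw [hent, hcu, hzu, hpj, IsUnit.unit_spec]
        ring
      · rw [Vexp_of_not _ h2, mul_zero]
    · rw [Vexp_of_not _ h1, zero_mul]


/-- For `r ≤ ℓ < j ≤ n−1`: `V_ℓ * V_j = V_j * V_ℓ = p^{n−j−1}(p−1) V_ℓ` in `H(χ)`. -/
theorem stmt6 (p n r : ℕ) [Fact p.Prime] (hn : 1 ≤ n) (hr : 1 ≤ r) (hrn : r ≤ n)
    (χ : (ZMod (p ^ n))ˣ →* ℂˣ) (hχ : hasConductor p n r χ)
    (V : ℕ → GL (Fin 2) (ZMod (p ^ n)) → ℂ)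
    (hV : ∀ j, r ≤ j → j ≤ n → isV p n χ j (V j))
    (ℓ j : ℕ) (hℓ : r ≤ ℓ) (hℓj : ℓ < j) (hj : j ≤ n - 1) :
    conv (V ℓ) (V j) = conv (V j) (V ℓ) ∧
    ∀ x, conv (V ℓ) (V j) x = (p : ℂ) ^ (n - j - 1) * ((p : ℂ) - 1) * V ℓ x := by
  have hjn : j < n := by omega
  have hℓ1 : 1 ≤ ℓ := le_trans hr hℓ
  have hVℓ : V ℓ = Vexp p n χ ℓ := isV_eq hn hℓ1 (hV ℓ hℓ (by omega))
  have hVj : V j = Vexp p n χ j := isV_eq hn (by omega) (hV j (by omega) (by omega))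
  have hcast : ((p ^ (n - j - 1) * (p - 1) : ℕ) : ℂ)
      = (p : ℂ) ^ (n - j - 1) * ((p : ℂ) - 1) := by
    have hp1 : 1 ≤ p := (Fact.out : p.Prime).one_le
    push_cast [Nat.cast_sub hp1]
    ring
  constructor
  · funext x
    rw [hVℓ, hVj, conv_Vexp₁ hn hr hχ.1 hℓ hℓj hjn x, conv_Vexp₂ hn hr hχ.1 hℓ hℓj hjn x]
  · intro x
    rw [hVℓ, hVj, conv_Vexp₁ hn hr hχ.1 hℓ hℓj hjn x, hcast, mul_assoc]

end
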